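/- Let 𝒳 be a type, r ≥ 1 and d ≥ 1 natural numbers, and H₁, …, H_r hypothesis classes on 𝒳, each of VC dimension at most d. Then every finite subset of 𝒳 shattered by the union H₁ ∪ ⋯ ∪ H_r has cardinality at most 4·d·log(2·d) + 2·log r (natural logarithm, with naturals coerced to ℝ); i.e., the VC dimension of the union is at most 4d·log(2d) + 2·log r. -/

import Mathlib

/-- A hypothesis class `H` of Boolean functions on `𝒳` shatters a finite set
`S` if every labeling of `S` is realized by some `h ∈ H`. -/
def Shatters {𝒳 : Type*} (H : Set (𝒳 → Bool)) (S : Finset 𝒳) : Prop :=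
  ∀ g : 𝒳 → Bool, ∃ h ∈ H, ∀ x ∈ S, h x = g x

private lemma stmt7_comb (𝒳 : Type*) (r d : ℕ) (H : Fin r → Set (𝒳 → Bool))
    (hH : ∀ i, ∀ S : Finset 𝒳, Shatters (H i) S → S.card ≤ d)
    (S : Finset 𝒳) (hS : Shatters (⋃ i, H i) S) (hm : 1 ≤ S.card) :
    2 ^ S.card ≤ r * (2 * S.card) ^ d := by
  classical
  set m := S.card with hmdef
  set 𝒜 : Fin r → Finset (Finset 𝒳) := fun i =>
    S.powerset.filter (fun T => ∃ h ∈ H i, ∀ x ∈ S, (h x = true ↔ x ∈ T)) with h𝒜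
  -- cover
  have hcov : S.powerset ⊆ Finset.univ.biUnion 𝒜 := by
    intro T hT
    obtain ⟨h, hh, hhx⟩ := hS (fun x => decide (x ∈ T))
    obtain ⟨i, hi⟩ := Set.mem_iUnion.1 hh
    refine Finset.mem_biUnion.2 ⟨i, Finset.mem_univ _, Finset.mem_filter.2 ⟨hT, h, hi, ?_⟩⟩
    intro x hx
    rw [hhx x hx]
    simp
  -- per-class bound
  have hper : ∀ i, (𝒜 i).card ≤ (d + 1) * m ^ d := by
    intro i
    have hsh : (𝒜 i).shatterer ⊆ (Finset.range (d+1)).biUnion (fun k => S.powersetCard k) := by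
      intro s hs
      have hs' : (𝒜 i).Shatters s := Finset.mem_shatterer.1 hs
      obtain ⟨t, ht, hst⟩ := hs'.exists_superset
      have htS : t ⊆ S := Finset.mem_powerset.1 (Finset.mem_filter.1 ht).1
      have hsS : s ⊆ S := hst.trans htS
      have hcard : s.card ≤ d := by
        apply hH i s
        intro g
        obtain ⟨u, hu, hsu⟩ := hs' (Finset.filter_subset (fun x => g x = true) s)
        obtain ⟨-, h, hhH, hiff⟩ := Finset.mem_filter.1 hu
        refine ⟨h, hhH, fun x hx => ?_⟩
        have hxS : x ∈ S := hsS hx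
        by_cases hg : g x = true
        · have : x ∈ s ∩ u := hsu ▸ Finset.mem_filter.2 ⟨hx, hg⟩
          rw [(hiff x hxS).2 (Finset.mem_inter.1 this).2, hg]
        · have hxu : x ∉ u := by
            intro hxu
            have : x ∈ s.filter (fun x => g x = true) := hsu ▸ Finset.mem_inter.2 ⟨hx, hxu⟩
            exact hg (Finset.mem_filter.1 this).2
          have : h x ≠ true := fun hh' => hxu ((hiff x hxS).1 hh')
          simp only [Bool.not_eq_true] at this hg
          rw [this, hg]
      exact Finset.mem_biUnion.2 ⟨s.card, Finset.mem_range.2 (Nat.lt_succ_of_le hcard),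
        Finset.mem_powersetCard.2 ⟨hsS, rfl⟩⟩
    calc (𝒜 i).card ≤ (𝒜 i).shatterer.card := Finset.card_le_card_shatterer _
      _ ≤ ((Finset.range (d+1)).biUnion (fun k => S.powersetCard k)).card :=
          Finset.card_le_card hsh
      _ ≤ ∑ k ∈ Finset.range (d+1), (S.powersetCard k).card := Finset.card_biUnion_le
      _ ≤ ∑ k ∈ Finset.range (d+1), m ^ d := by
          refine Finset.sum_le_sum fun k hk => ?_
          rw [Finset.card_powersetCard]
          exact (Nat.choose_le_pow m k).trans
            (Nat.pow_le_pow_right hm (Nat.lt_succ_iff.1 (Finset.mem_range.1 hk)))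
      _ = (d + 1) * m ^ d := by simp [Finset.sum_const, mul_comm]
  calc 2 ^ m = S.powerset.card := (Finset.card_powerset S).symm
    _ ≤ (Finset.univ.biUnion 𝒜).card := Finset.card_le_card hcov
    _ ≤ ∑ i, (𝒜 i).card := Finset.card_biUnion_le
    _ ≤ ∑ _i : Fin r, (d + 1) * m ^ d := Finset.sum_le_sum fun i _ => hper i
    _ = r * ((d + 1) * m ^ d) := by simp [mul_comm]
    _ ≤ r * (2 ^ d * m ^ d) := by
        apply Nat.mul_le_mul_left
        exact Nat.mul_le_mul_right _ (Nat.succ_le_of_lt (Nat.lt_two_pow_self (n := d)))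
    _ = r * (2 * m) ^ d := by rw [mul_pow]

private lemma stmt7_analytic (r d m : ℕ) (hr : 1 ≤ r) (hd : 1 ≤ d) (hm : 1 ≤ m)
    (h : 2 ^ m ≤ r * (2 * m) ^ d) :
    (m : ℝ) ≤ 4 * d * Real.log (2 * d) + 2 * Real.log r := by
  have hD : (1:ℝ) ≤ d := by exact_mod_cast hd
  have hR : (1:ℝ) ≤ r := by exact_mod_cast hr
  have hM : (1:ℝ) ≤ m := by exact_mod_cast hm
  have hl2 : (0.6931471803 : ℝ) < Real.log 2 := Real.log_two_gt_d9
  set M := (m : ℝ)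
  set D := (d : ℝ)
  set R := (r : ℝ)
  obtain ⟨c, hc⟩ : ∃ c : ℝ, c = Real.log 2 - 1/2 := ⟨_, rfl⟩
  have hc0 : 0 < c := by rw [hc]; linarith
  -- cast hypothesis and take logs
  have hcast : (2:ℝ) ^ m ≤ R * (2 * M) ^ d := by
    have := (Nat.cast_le (α := ℝ)).2 h
    push_cast at this
    convert this using 2
  have h2M : (0:ℝ) < 2 * M := by linarith
  have hlog : M * Real.log 2 ≤ Real.log R + D * Real.log (2 * M) := by
    have hlhs : (0:ℝ) < 2 ^ m := by positivity
    have := Real.log_le_log hlhs hcast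
    rw [Real.log_pow, Real.log_mul (by linarith : R ≠ 0) (by positivity), Real.log_pow] at this
    push_cast at this ⊢
    linarith
  -- tangent-line bound on log (2M)
  have hu : (0:ℝ) < c / (2 * D) := by positivity
  have h1 : Real.log (2 * M) ≤ (2 * M) * (c / (2 * D)) - 1 - Real.log (c / (2 * D)) := by
    have hx := Real.log_le_sub_one_of_pos (mul_pos h2M hu)
    rw [Real.log_mul (ne_of_gt h2M) (ne_of_gt hu)] at hx
    linarith
  have h2 : (2 * M) * (c / (2 * D)) = M * c / D := by
    field_simp
  have h3 : Real.log (c / (2 * D)) = Real.log c - Real.log (2 * D) := by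
    rw [Real.log_div (ne_of_gt hc0) (by positivity)]
  have hDne : D ≠ 0 := by linarith
  have h4 : D * (M * c / D) = M * c := by field_simp
  -- combine: M/2 ≤ log R + D*(log(2D) - log c - 1)
  have h5 : M / 2 ≤ Real.log R + D * (Real.log (2 * D) - Real.log c - 1) := by
    have := hlog
    rw [hc] at *
    nlinarith [mul_le_mul_of_nonneg_left h1 (by linarith : (0:ℝ) ≤ D)]
  -- bound on log c
  have hlogc : -(1 + Real.log 2) ≤ Real.log c := by
    rw [← Real.exp_le_exp, Real.exp_log hc0]
    have he : (2.7182818283 : ℝ) < Real.exp 1 := Real.exp_one_gt_d9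
    have : Real.exp (-(1 + Real.log 2)) = 1 / (Real.exp 1 * 2) := by
      rw [neg_add, Real.exp_add, Real.exp_neg, Real.exp_neg, Real.exp_log (by norm_num : (0:ℝ) < 2)]
      field_simp
    rw [this]
    rw [div_le_iff₀ (by positivity)]
    have hce : (0.1931471803:ℝ) < c := by rw [hc]; linarith
    nlinarith [mul_pos hc0 (sub_pos.2 he), hce]
  have hl2D : Real.log 2 ≤ Real.log (2 * D) := by
    apply Real.log_le_log (by norm_num)
    nlinarith
  -- finish
  have h6 : -Real.log c - 1 ≤ Real.log (2 * D) := by linarith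
  nlinarith [mul_le_mul_of_nonneg_left h6 (by linarith : (0:ℝ) ≤ 2 * D)]

/-- Proposition A.1, VC-dimension of the union: if each of the
`r ≥ 1` hypothesis classes `H i` has VC dimension at most `d ≥ 1`, then every
finite set shattered by their union has cardinality at most
`4·d·log (2·d) + 2·log r`. -/
theorem stmt_7 (𝒳 : Type*) (r d : ℕ) (hr : 1 ≤ r) (hd : 1 ≤ d)
    (H : Fin r → Set (𝒳 → Bool))
    (hH : ∀ i, ∀ S : Finset 𝒳, Shatters (H i) S → S.card ≤ d) :
    ∀ S : Finset 𝒳, Shatters (⋃ i, H i) S →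
      (S.card : ℝ) ≤ 4 * d * Real.log (2 * d) + 2 * Real.log r := by
  intro S hS
  rcases Nat.eq_zero_or_pos S.card with h0 | hm
  · rw [h0]
    have h1 : (0:ℝ) ≤ Real.log (2 * d) := Real.log_nonneg (by exact_mod_cast Nat.one_le_iff_ne_zero.2 (by positivity))
    have h2 : (0:ℝ) ≤ Real.log r := Real.log_nonneg (by exact_mod_cast hr)
    have hD : (1:ℝ) ≤ d := by exact_mod_cast hd
    push_cast
    nlinarith
  · exact stmt7_analytic r d S.card hr hd hm (stmt7_comb 𝒳 r d H hH S hS hm)
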